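/- Setup: fix finite sets B₁, C, H; for each b ∈ B₁ ∪ {∞} a nonempty finite set A_b with positive integers m_{b,a}; for each c ∈ C a nonempty finite set A''_c with positive integers m''_{c,a''}, and assume A'_c = ∅ for all c ∈ C (the minimal-arrangement case). Let L be the free ℤ-module on I = (⊔_{b∈B₁∪{∞}} A_b) ⊔ H, L' the free ℤ-module on I ⊔ (⊔_{c∈C} A''_c), j : L' → L the projection forgetting the A''-coordinates, (f_*α)_b = ∑_{a∈A_b} m_{b,a}α_{b,a} − ∑_{a∈A_∞} m_{∞,a}α_{∞,a} for b ∈ B₁, and f'_* : L' → ℤ^{B₁} ⊕ ℤ^{C} given by the same B₁-formula together with c-components ∑_{a''∈A''_c} m''_{c,a''}β_{c,a''} − ∑_{a∈A_∞} m_{∞,a}β_{∞,a}. Set m''(c) = gcd_{a''∈A''_c} m''_{c,a''}, G = ⊕_{c∈C} ℤ/m''(c)ℤ, m(b) = gcd_{a∈A_b} m_{b,a} for b ∈ B₁ ∪ {∞}, and m(f) = lcm of the m(b) over b ∈ B₁ ∪ {∞}. Let θ : ker f_* → G send α to the element whose c-coordinate is the class of ∑_{a∈A_∞} m_{∞,a}α_{∞,a}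 modulo m''(c). Then θ(ker f_*) is the cyclic subgroup of G generated by the element whose c-coordinate is the class of m(f) modulo m''(c) for every c ∈ C; consequently the quotient T = (ker f_*)/j(ker f'_*) is a cyclic group, and if m''(c) divides m(f) for all c ∈ C then T is trivial. -/
import Mathlib


open Finset

section PencilModel

variable (B₁ C H : Type) [Fintype B₁] [Fintype C] [Fintype H]
  (A : Option B₁ → Type) [∀ b, Fintype (A b)]
  (A' : C → Type) [∀ c, Fintype (A' c)]
  (A'' : C → Type) [∀ c, Fintype (A'' c)]
  (m : ∀ b, A b → ℕ) (m' : ∀ c, A' c → ℕ) (m'' : ∀ c, A'' c → ℕ)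

/-- The index set of the basis of elementary loops of `L = H₁(M)`: loops around the
curves `C_{b,a}` (`b ∈ B₁ ∪ {∞}`, `a ∈ A_b`), the curves `C'_{c,a'}` (`c ∈ C`,
`a' ∈ A'_c`) and the horizontal components (indexed by `H`). -/

lemma mk'_apply_aux {M G : Type*} [AddZeroClass M] [AddGroup G] (f : M → G)
    (h : ∀ a b, f (a + b) = f a + f b) (x : M) : AddMonoidHom.mk' f h x = f x := rfl

lemma bezout_finset {ι : Type*} [DecidableEq ι] (s : Finset ι) (f : ι → ℕ) :
    ∃ x : ι → ℤ, ∑ i ∈ s, (f i : ℤ) * x i = ((s.gcd f : ℕ) : ℤ) := by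
  induction s using Finset.induction_on with
  | empty => exact ⟨0, by simp⟩
  | @insert a s ha ih =>
    obtain ⟨x, hx⟩ := ih
    refine ⟨fun i => if i = a then Nat.gcdA (f a) (s.gcd f) else Nat.gcdB (f a) (s.gcd f) * x i, ?_⟩
    rw [Finset.sum_insert ha, Finset.gcd_insert]
    have h2 : ∑ i ∈ s, (f i : ℤ) * (if i = a then Nat.gcdA (f a) (s.gcd f) else Nat.gcdB (f a) (s.gcd f) * x i)
        = Nat.gcdB (f a) (s.gcd f) * ∑ i ∈ s, (f i : ℤ) * x i := by
      rw [Finset.mul_sum]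
      refine Finset.sum_congr rfl fun i hi => ?_
      rw [if_neg (by rintro rfl; exact ha hi)]; ring
    simp only [if_pos rfl, if_true] at *
    rw [h2, hx]
    have h3 := Nat.gcd_eq_gcd_ab (f a) (s.gcd f)
    have h4 : ((GCDMonoid.gcd (f a) (s.gcd f) : ℕ) : ℤ) = ((Nat.gcd (f a) (s.gcd f) : ℕ) : ℤ) := by
      norm_cast
    rw [h4, h3]; ring

lemma lcm_cast_dvd {ι : Type*} (s : Finset ι) (g : ι → ℕ) (z : ℤ)
    (h : ∀ i ∈ s, ((g i : ℕ) : ℤ) ∣ z) : ((s.lcm g : ℕ) : ℤ) ∣ z := by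
  rw [Int.natCast_dvd]
  refine Finset.lcm_dvd fun i hi => ?_
  rw [← Int.natCast_dvd]
  exact h i hi

abbrev Idx := (Σ b : Option B₁, A b) ⊕ ((Σ c : C, A' c) ⊕ H)

/-- The index set of the basis of elementary loops of `L' = H₁(M')`: that of `L`
together with loops around the extra deleted curves `C''_{c,a''}`. -/
abbrev Idx' := (Idx B₁ C H A A') ⊕ (Σ c : C, A'' c)

/-- The projection `j : L' → L` forgetting the `A''`-coordinates. -/
def jmap : ((Idx' B₁ C H A A' A'') → ℤ) →+ ((Idx B₁ C H A A') → ℤ) :=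
  AddMonoidHom.mk' (fun β i => β (Sum.inl i)) (fun _ _ => rfl)

/-- The map `f_* : L → ℤ^{B₁}`,
`(f_* α)_b = ∑_{a ∈ A_b} m_{b,a} α_{b,a} − ∑_{a ∈ A_∞} m_{∞,a} α_{∞,a}`. -/
def fstar : ((Idx B₁ C H A A') → ℤ) →+ (B₁ → ℤ) :=
  AddMonoidHom.mk'
    (fun α b =>
      (∑ a : A (some b), (m (some b) a : ℤ) * α (Sum.inl ⟨some b, a⟩)) -
      (∑ a : A none, (m none a : ℤ) * α (Sum.inl ⟨none, a⟩)))
    (by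
      intro x y
      funext b
      simp only [Pi.add_apply, mul_add, Finset.sum_add_distrib]
      ring)

/-- The map `f'_* : L' → ℤ^{B₁} ⊕ ℤ^{C}`, with the same `B₁`-components as `f_*` and with
`c`-component `∑_{a'} m'_{c,a'} β_{c,a'} + ∑_{a''} m''_{c,a''} β_{c,a''}
− ∑_{a ∈ A_∞} m_{∞,a} β_{∞,a}`. -/
def fstar' : ((Idx' B₁ C H A A' A'') → ℤ) →+ ((B₁ → ℤ) × (C → ℤ)) :=
  AddMonoidHom.mk'
    (fun β =>
      (fun b =>
        (∑ a : A (some b), (m (some b) a : ℤ) * β (Sum.inl (Sum.inl ⟨some b, a⟩))) -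
        (∑ a : A none, (m none a : ℤ) * β (Sum.inl (Sum.inl ⟨none, a⟩))),
       fun c =>
        (∑ a' : A' c, (m' c a' : ℤ) * β (Sum.inl (Sum.inr (Sum.inl ⟨c, a'⟩)))) +
        (∑ a'' : A'' c, (m'' c a'' : ℤ) * β (Sum.inr ⟨c, a''⟩)) -
        (∑ a : A none, (m none a : ℤ) * β (Sum.inl (Sum.inl ⟨none, a⟩)))))
    (by
      intro x y
      refine Prod.ext (funext fun b => ?_) (funext fun c => ?_) <;>
      · simp only [Prod.fst_add, Prod.snd_add, Pi.add_apply, mul_add, Finset.sum_add_distrib]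
        ring)

/-- `m''(c)`, the gcd of the multiplicities `m''_{c,a''}` over `a'' ∈ A''_c`. -/
def gcd2 (c : C) : ℕ := Finset.univ.gcd (m'' c)

/-- The map `θ : ker f_* → G = ⊕_{c ∈ C} ℤ/m''(c)ℤ` sending `α` to the element whose
`c`-coordinate is the class of
`∑_{a ∈ A_∞} m_{∞,a} α_{∞,a} − ∑_{a' ∈ A'_c} m'_{c,a'} α_{c,a'}` modulo `m''(c)`. -/
def theta : (fstar B₁ C H A A' m).ker →+ (∀ c : C, ZMod (gcd2 C A'' m'' c)) :=
  AddMonoidHom.mk'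
    (fun α c =>
      ((((∑ a : A none, (m none a : ℤ) * (α : (Idx B₁ C H A A') → ℤ) (Sum.inl ⟨none, a⟩)) -
         (∑ a' : A' c, (m' c a' : ℤ) * (α : (Idx B₁ C H A A') → ℤ) (Sum.inr (Sum.inl ⟨c, a'⟩)))) : ℤ) :
        ZMod (gcd2 C A'' m'' c)))
    (by
      intro x y
      funext c
      simp only [AddSubgroup.coe_add, Pi.add_apply, mul_add, Finset.sum_add_distrib]
      push_cast
      ring)

end PencilModel

/-- Corollary 6.2 of the paper, explicit model: in the minimal-arrangement
case (all the sets `A'_c` are empty), with `m(b) = gcd_{a ∈ A_b} m_{b,a}` and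
`m(f) = lcm_{b ∈ B₁ ∪ {∞}} m(b)`, the image of `θ` is the cyclic subgroup of
`G = ⊕_{c ∈ C} ℤ/m''(c)ℤ` generated by the element whose every `c`-coordinate is the class
of `m(f)`; consequently `T = (ker f_*)/j(ker f'_*)` is cyclic, and if `m''(c) ∣ m(f)` for
all `c ∈ C` then `T` is trivial. -/
theorem stmt_14 (B₁ C H : Type) [Fintype B₁] [Fintype C] [Fintype H]
    (A : Option B₁ → Type) [∀ b, Fintype (A b)] [∀ b, Nonempty (A b)]
    (A' : C → Type) [∀ c, Fintype (A' c)] [∀ c, IsEmpty (A' c)]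
    (A'' : C → Type) [∀ c, Fintype (A'' c)] [∀ c, Nonempty (A'' c)]
    (m : ∀ b, A b → ℕ) (hm : ∀ b a, 0 < m b a)
    (m' : ∀ c, A' c → ℕ)
    (m'' : ∀ c, A'' c → ℕ) (hm'' : ∀ c a'', 0 < m'' c a'') :
    ((theta B₁ C H A A' A'' m m' m'').range =
      AddSubgroup.zmultiples
        (fun c : C =>
          ((Finset.univ.lcm fun b : Option B₁ => Finset.univ.gcd (m b) : ℕ) :
            ZMod (gcd2 C A'' m'' c)))) ∧
    IsAddCyclic
      ((fstar B₁ C H A A' m).ker ⧸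
        ((fstar' B₁ C H A A' A'' m m' m'').ker.map
          (jmap B₁ C H A A' A'')).addSubgroupOf (fstar B₁ C H A A' m).ker) ∧
    ((∀ c : C, gcd2 C A'' m'' c ∣ Finset.univ.lcm fun b : Option B₁ => Finset.univ.gcd (m b)) →
      Subsingleton
        ((fstar B₁ C H A A' m).ker ⧸
          ((fstar' B₁ C H A A' A'' m m' m'').ker.map
            (jmap B₁ C H A A' A'')).addSubgroupOf (fstar B₁ C H A A' m).ker)) := by
    classical
  -- Notation
  set Mf : ℕ := Finset.univ.lcm (fun b : Option B₁ => Finset.univ.gcd (m b)) with hMf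
  set S : ((Idx B₁ C H A A') → ℤ) → ℤ :=
    fun α => ∑ a : A none, (m none a : ℤ) * α (Sum.inl ⟨none, a⟩) with hS
  have gpos : ∀ b : Option B₁, Finset.univ.gcd (m b) ≠ 0 := by
    intro b h
    rw [Finset.gcd_eq_zero_iff] at h
    obtain ⟨a⟩ := ‹∀ b, Nonempty (A b)› b
    exact (hm b a).ne' (h a (Finset.mem_univ a))
  have g2pos : ∀ c : C, gcd2 C A'' m'' c ≠ 0 := by
    intro c h
    rw [gcd2, Finset.gcd_eq_zero_iff] at h
    obtain ⟨a⟩ := ‹∀ c, Nonempty (A'' c)› c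
    exact (hm'' c a).ne' (h a (Finset.mem_univ a))
  -- evaluation of theta
  have hth : ∀ (x : (fstar B₁ C H A A' m).ker) (c : C),
      theta B₁ C H A A' A'' m m' m'' x c
        = ((S (x : (Idx B₁ C H A A') → ℤ) : ℤ) : ZMod (gcd2 C A'' m'' c)) := by
    intro x c
    have he : (Finset.univ : Finset (A' c)) = ∅ := Finset.univ_eq_empty
    simp only [theta, mk'_apply_aux, he, Finset.sum_empty, sub_zero, hS]
  -- the B₁-fiber sums equal S α on the kernel
  have hfib : ∀ α ∈ (fstar B₁ C H A A' m).ker, ∀ b : B₁,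
      ∑ a : A (some b), (m (some b) a : ℤ) * α (Sum.inl ⟨some b, a⟩) = S α := by
    intro α hα b
    have := congrFun (AddMonoidHom.mem_ker.mp hα) b
    simp only [fstar, mk'_apply_aux, Pi.zero_apply] at this
    rw [hS]
    linarith [this]
  -- Mf divides S α on the kernel
  have hdvdS : ∀ α ∈ (fstar B₁ C H A A' m).ker, ((Mf : ℕ) : ℤ) ∣ S α := by
    intro α hα
    refine lcm_cast_dvd _ _ _ fun b _ => ?_
    have hgc : ∀ (b : Option B₁), ((Finset.univ.gcd (m b) : ℕ) : ℤ) ∣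
        ∑ a : A b, (m b a : ℤ) * α (Sum.inl ⟨b, a⟩) := by
      intro b
      refine Finset.dvd_sum fun a _ => Dvd.dvd.mul_right ?_ _
      exact_mod_cast Int.natCast_dvd_natCast.mpr (Finset.gcd_dvd (Finset.mem_univ a))
    cases b with
    | none => exact hgc none
    | some b => rw [← hfib α hα b]; exact hgc (some b)
  -- realize any multiple of Mf as S α for α in the kernel
  have hreal : ∀ k : ℤ, ∃ α, α ∈ (fstar B₁ C H A A' m).ker ∧ S α = k * Mf := by
    intro k
    have hx : ∀ b : Option B₁, ∃ x : A b → ℤ,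
        ∑ a : A b, (m b a : ℤ) * x a = ((Finset.univ.gcd (m b) : ℕ) : ℤ) :=
      fun b => bezout_finset _ _
    choose x hxs using hx
    set q : Option B₁ → ℕ := fun b => Mf / Finset.univ.gcd (m b) with hq
    have hqm : ∀ b, (q b * Finset.univ.gcd (m b) : ℕ) = Mf := by
      intro b
      exact Nat.div_mul_cancel (Finset.dvd_lcm (Finset.mem_univ b))
    set α : (Idx B₁ C H A A') → ℤ :=
      Sum.elim (fun p : Σ b : Option B₁, A b => k * (q p.1 : ℤ) * x p.1 p.2) 0 with hαdef
    have hsum : ∀ b : Option B₁,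
        ∑ a : A b, (m b a : ℤ) * α (Sum.inl ⟨b, a⟩) = k * Mf := by
      intro b
      have : ∑ a : A b, (m b a : ℤ) * α (Sum.inl ⟨b, a⟩)
          = k * (q b : ℤ) * ∑ a : A b, (m b a : ℤ) * x b a := by
        rw [Finset.mul_sum]
        refine Finset.sum_congr rfl fun a _ => ?_
        simp only [hαdef, Sum.elim_inl]
        ring
      rw [this, hxs b]
      have := hqm b
      push_cast [← this]
      ring
    refine ⟨α, ?_, hsum none⟩
    rw [AddMonoidHom.mem_ker]
    funext b
    simp only [fstar, mk'_apply_aux, Pi.zero_apply]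
    rw [hsum (some b)]
    linarith [hsum none]
  -- the generator
  set gelt : ∀ c : C, ZMod (gcd2 C A'' m'' c) :=
    fun c => ((Mf : ℕ) : ZMod (gcd2 C A'' m'' c)) with hgelt
  -- theta of an element is (S α / Mf) • gelt
  have hsmul : ∀ (k : ℤ) (x : (fstar B₁ C H A A' m).ker),
      S (x : (Idx B₁ C H A A') → ℤ) = k * Mf →
      theta B₁ C H A A' A'' m m' m'' x = k • gelt := by
    intro k x hk
    funext c
    rw [hth x c, hk, hgelt, Pi.smul_apply, zsmul_eq_mul]
    push_cast
    ring
  -- Part 1 : range theta = zmultiples gelt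
  have hrange : (theta B₁ C H A A' A'' m m' m'').range = AddSubgroup.zmultiples gelt := by
    ext v
    rw [AddMonoidHom.mem_range, AddSubgroup.mem_zmultiples_iff]
    constructor
    · rintro ⟨x, rfl⟩
      obtain ⟨k, hk⟩ := hdvdS (x : (Idx B₁ C H A A') → ℤ) x.2
      exact ⟨k, (hsmul k x (by rw [hk]; ring)).symm⟩
    · rintro ⟨k, rfl⟩
      obtain ⟨α, hα, hkk⟩ := hreal k
      exact ⟨⟨α, hα⟩, hsmul k ⟨α, hα⟩ hkk⟩
  -- kernel of theta = the subgroup we quotient by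
  have hker : ((fstar' B₁ C H A A' A'' m m' m'').ker.map
      (jmap B₁ C H A A' A'')).addSubgroupOf (fstar B₁ C H A A' m).ker
      = (theta B₁ C H A A' A'' m m' m'').ker := by
    ext x
    obtain ⟨α, hα⟩ := x
    rw [AddSubgroup.mem_addSubgroupOf, AddMonoidHom.mem_ker]
    constructor
    · rintro ⟨β, hβ, hjβ⟩
      have hcoe : ∀ i, α i = β (Sum.inl i) := by
        intro i
        exact (congrFun hjβ i).symm
      funext c
      rw [hth ⟨α, hα⟩ c, Pi.zero_apply, ZMod.intCast_zmod_eq_zero_iff_dvd]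
      have hc := congrFun (congrArg Prod.snd (AddMonoidHom.mem_ker.mp hβ)) c
      simp only [fstar', mk'_apply_aux, Prod.snd_zero, Pi.zero_apply,
        show (Finset.univ : Finset (A' c)) = ∅ from Finset.univ_eq_empty,
        Finset.sum_empty, zero_add] at hc
      have hSe : S α = ∑ a'' : A'' c, (m'' c a'' : ℤ) * β (Sum.inr ⟨c, a''⟩) := by
        rw [hS]
        simp only [hcoe]
        linarith [hc]
      rw [hSe]
      refine Finset.dvd_sum fun a _ => Dvd.dvd.mul_right ?_ _
      exact Int.natCast_dvd_natCast.mpr (Finset.gcd_dvd (Finset.mem_univ a))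
    · intro hz
      have hdvd2 : ∀ c : C, ((gcd2 C A'' m'' c : ℕ) : ℤ) ∣ S α := by
        intro c
        rw [← ZMod.intCast_zmod_eq_zero_iff_dvd]
        rw [← hth ⟨α, hα⟩ c]
        exact congrFun hz c
      have hy : ∀ c : C, ∃ y : A'' c → ℤ,
          ∑ a : A'' c, (m'' c a : ℤ) * y a = ((Finset.univ.gcd (m'' c) : ℕ) : ℤ) :=
        fun c => bezout_finset _ _
      choose y hys using hy
      choose t ht using hdvd2
      set β : (Idx' B₁ C H A A' A'') → ℤ :=
        Sum.elim α (fun p : Σ c : C, A'' c => t p.1 * y p.1 p.2) with hβdef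
      have hsum'' : ∀ c : C, ∑ a'' : A'' c, (m'' c a'' : ℤ) * β (Sum.inr ⟨c, a''⟩) = S α := by
        intro c
        have : ∑ a'' : A'' c, (m'' c a'' : ℤ) * β (Sum.inr ⟨c, a''⟩)
            = t c * ∑ a'' : A'' c, (m'' c a'' : ℤ) * y c a'' := by
          rw [Finset.mul_sum]
          refine Finset.sum_congr rfl fun a _ => ?_
          simp only [hβdef, Sum.elim_inr]
          ring
        rw [this, hys c, ht c, gcd2]
        ring
      refine AddSubgroup.mem_map.mpr ⟨β, ?_, rfl⟩
      rw [AddMonoidHom.mem_ker]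
      have hfa := AddMonoidHom.mem_ker.mp hα
      refine Prod.ext (funext fun b => ?_) (funext fun c => ?_)
      · have := congrFun hfa b
        simp only [fstar, mk'_apply_aux, Pi.zero_apply] at this
        simpa only [fstar', mk'_apply_aux, Prod.fst_zero, Pi.zero_apply, hβdef,
          Sum.elim_inl] using this
      · simp only [fstar', mk'_apply_aux, Prod.snd_zero, Pi.zero_apply,
          show (Finset.univ : Finset (A' c)) = ∅ from Finset.univ_eq_empty,
          Finset.sum_empty, zero_add]
        rw [hsum'' c]
        rw [hS]
        simp only [hβdef, Sum.elim_inl]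
        ring
  refine ⟨hrange, ?_, ?_⟩
  · -- cyclicity
    have e0 := QuotientAddGroup.quotientAddEquivOfEq hker
    have e := QuotientAddGroup.quotientKerEquivRange (theta B₁ C H A A' A'' m m' m'')
    have hcyc : IsAddCyclic (theta B₁ C H A A' A'' m m' m'').range := by
      rw [hrange]
      refine ⟨⟨gelt, AddSubgroup.mem_zmultiples gelt⟩, fun v => ?_⟩
      obtain ⟨w, k, hk⟩ := v
      exact ⟨k, Subtype.ext (by simpa using hk)⟩
    have e2 := (e.symm.trans e0.symm)
    exact isAddCyclic_of_surjective e2.toAddMonoidHom e2.surjective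
  · -- triviality
    intro hdd
    have htop : ((fstar' B₁ C H A A' A'' m m' m'').ker.map
        (jmap B₁ C H A A' A'')).addSubgroupOf (fstar B₁ C H A A' m).ker = ⊤ := by
      rw [hker]
      rw [AddSubgroup.eq_top_iff']
      intro x
      rw [AddMonoidHom.mem_ker]
      funext c
      rw [hth x c, Pi.zero_apply, ZMod.intCast_zmod_eq_zero_iff_dvd]
      exact dvd_trans (Int.natCast_dvd_natCast.mpr (hdd c)) (hdvdS _ x.2)
    have e0 := QuotientAddGroup.quotientAddEquivOfEq htop
    haveI : Subsingleton ((fstar B₁ C H A A' m).ker ⧸ (⊤ : AddSubgroup (fstar B₁ C H A A' m).ker)) :=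
      QuotientAddGroup.subsingleton_quotient_top
    exact e0.toEquiv.subsingleton
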